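/- Let u : ℝ → ℝ be continuously differentiable with u(0) = 0 and u′(0) = 1. Suppose there exists a function f : ℝ → ℝ such that u(−x−y)·f(y) = u(−x) − u(y) for all x, y ∈ ℝ. Then there exists λ ∈ ℝ such that u′(z) = exp(−λ z) for all z ∈ ℝ; consequently u(z) = (1 − exp(−λ z))/λ for all z if λ ≠ 0, and u(z) = z for all z if λ = 0. -/

import Mathlib

/-- If `u` is `C¹` with `u(0) = 0`, `u'(0) = 1`, and
`u(−x−y)·f(y) = u(−x) − u(y)` for some `f` and all `x, y`, then
`u'(z) = e^{−λz}` for some `λ`; hence `u(z) = (1 − e^{−λz})/λ` if `λ ≠ 0`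
and `u(z) = z` if `λ = 0`. -/
theorem formal_group_law_is_multiplicative
    (u f : ℝ → ℝ) (hu : ContDiff ℝ 1 u) (hu0 : u 0 = 0) (hu1 : deriv u 0 = 1)
    (hf : ∀ x y : ℝ, u (-x - y) * f y = u (-x) - u y) :
    ∃ l : ℝ, (∀ z : ℝ, deriv u z = Real.exp (-(l * z))) ∧
      (l ≠ 0 → ∀ z : ℝ, u z = (1 - Real.exp (-(l * z))) / l) ∧
      (l = 0 → ∀ z : ℝ, u z = z) := by
  have hud : Differentiable ℝ u := hu.differentiable one_ne_zero
  set g : ℝ → ℝ := fun z => deriv u (-z) with hgdef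
  have key : ∀ x y : ℝ, g (x + y) * f y = g x := by
    intro x y
    have h1 : HasDerivAt (fun x : ℝ => u (-x - y) * f y)
        (deriv u (-x - y) * (-1) * f y) x := by
      have hin : HasDerivAt (fun x : ℝ => -x - y) (-1) x := by
        simpa using ((hasDerivAt_id x).neg.sub_const y)
      exact ((hud (-x - y)).hasDerivAt.comp x hin).mul_const (f y)
    have h2 : HasDerivAt (fun x : ℝ => u (-x) - u y) (deriv u (-x) * (-1)) x := by
      have hin : HasDerivAt (fun x : ℝ => -x) (-1) x := by
        exact (hasDerivAt_id x).neg
      exact ((hud (-x)).hasDerivAt.comp x hin).sub_const (u y)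
    have heq : (fun x : ℝ => u (-x - y) * f y) = fun x : ℝ => u (-x) - u y :=
      funext fun x => hf x y
    rw [heq] at h1
    have h3 := h1.unique h2
    have h4 : deriv u (-x - y) * f y = deriv u (-x) := by nlinarith [h3]
    show deriv u (-(x + y)) * f y = deriv u (-x)
    have h5 : -x - y = -(x + y) := by ring
    rw [h5] at h4
    exact h4
  have hgy : ∀ y, g y * f y = 1 := by
    intro y
    have h := key 0 y
    simpa [hgdef, hu1] using h
  have hgne : ∀ y, g y ≠ 0 := by
    intro y h
    have := hgy y
    rw [h, zero_mul] at this
    exact zero_ne_one this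
  have hmul : ∀ x y, g (x + y) = g x * g y := by
    intro x y
    linear_combination g y * key x y - g (x + y) * hgy y
  have hgpos : ∀ t, 0 < g t := by
    intro t
    have h : g t = g (t / 2) * g (t / 2) := by
      rw [← hmul]; norm_num
    rw [h]
    exact mul_self_pos.mpr (hgne (t / 2))
  have hgc : Continuous g := (hu.continuous_deriv le_rfl).comp continuous_neg
  set h : ℝ → ℝ := fun t => Real.log (g t) with hhdef
  have hadd : ∀ x y, h (x + y) = h x + h y := by
    intro x y
    simp only [hhdef, hmul x y, Real.log_mul (hgne x) (hgne y)]
  have hhc : Continuous h := hgc.log hgne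
  set H : ℝ →+ ℝ := AddMonoidHom.mk' h hadd with hHdef
  have hlin := (H.toRealLinearMap hhc).map_smul
  have hht : ∀ t : ℝ, h t = t * h 1 := by
    intro t
    have := hlin t 1
    simp only [AddMonoidHom.coe_toRealLinearMap, smul_eq_mul, mul_one] at this
    simpa [hHdef] using this
  have hgt : ∀ t, g t = Real.exp (t * h 1) := by
    intro t
    rw [← hht t, hhdef, Real.exp_log (hgpos t)]
  refine ⟨h 1, ?_, ?_, ?_⟩
  · intro z
    have : deriv u z = g (-z) := by simp [hgdef]
    rw [this, hgt]; ring_nf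
  · intro hl z
    have hderiv : ∀ z : ℝ, deriv u z = Real.exp (-(h 1 * z)) := by
      intro z
      have : deriv u z = g (-z) := by simp [hgdef]
      rw [this, hgt]; ring_nf
    set l := h 1
    set v : ℝ → ℝ := fun z => (1 - Real.exp (-(l * z))) / l with hvdef
    have hv : ∀ z, HasDerivAt v (Real.exp (-(l * z))) z := by
      intro z
      have hin : HasDerivAt (fun z : ℝ => -(l * z)) (-l) z := by
        exact (((hasDerivAt_id z).const_mul l).neg).congr_deriv (by ring)
      have he : HasDerivAt (fun z : ℝ => Real.exp (-(l * z)))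
          (Real.exp (-(l * z)) * (-l)) z := (Real.hasDerivAt_exp _).comp z hin
      have := ((hasDerivAt_const z (1 : ℝ)).sub he).div_const l
      exact this.congr_deriv (by rw [div_eq_iff hl]; ring)
    have hDd : Differentiable ℝ (fun z => u z - v z) :=
      hud.sub (fun z => (hv z).differentiableAt)
    have hD0 : ∀ z, deriv (fun z => u z - v z) z = 0 := by
      intro z
      rw [deriv_fun_sub (hud z) (hv z).differentiableAt, (hv z).deriv, hderiv z]
      ring
    have := is_const_of_deriv_eq_zero hDd hD0 z 0
    have hv0 : v 0 = 0 := by simp [hvdef]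
    have : u z - v z = 0 := by rw [this, hu0, hv0]; ring
    linarith [this]
  · intro hl z
    have hderiv : ∀ z : ℝ, deriv u z = 1 := by
      intro z
      have : deriv u z = g (-z) := by simp [hgdef]
      rw [this, hgt, hl]; simp
    have hDd : Differentiable ℝ (fun z => u z - z) :=
      hud.sub differentiable_id
    have hD0 : ∀ z, deriv (fun z => u z - z) z = 0 := by
      intro z
      have hd := ((hud z).hasDerivAt.sub (hasDerivAt_id' (𝕜 := ℝ) (x := z))).deriv
      rw [show (fun z => u z - z) = u - fun x => x from rfl, hd, hderiv z]; ring
    have := is_const_of_deriv_eq_zero hDd hD0 z 0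
    simp only [hu0, sub_zero] at this
    linarith [this]
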